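/- arXiv:0806.0390 — 2 statements merged into one kernel-verified Lean document; each statement's English description precedes it below -/
import Mathlib

section
/- Double cone: Let P be a poset that is the union of two subposets Δ_1, Δ_2 intersecting in exactly one element p, where p is simultaneously the unique minimal element of Δ_1 and the unique maximal element of Δ_2. Then for any directed system G of abelian groups over P, H^1(or(P); G) ≅ H^1(or(Δ_2); G), and if G consists of vector spaces then also H^0(or(P); G) ≅ H^0(or(Δ_2); G). -/
/-- The `k`-simplices of the order complex of a poset `P`:
strictly increasing chains `p_0 < p_1 < ... < p_k`. -/
def OSimplex (P : Type) [PartialOrder P] (k : ℕ) : Type :=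
  {f : Fin (k + 1) → P // StrictMono f}

/-- The top (maximal) vertex of a simplex of the order complex. -/
def OSimplex.top {P : Type} [PartialOrder P] {k : ℕ} (σ : OSimplex P k) : P :=
  σ.1 (Fin.last k)

/-- The `i`-th face of a simplex of the order complex (omit the `i`-th vertex). -/
def OSimplex.face {P : Type} [PartialOrder P] {k : ℕ} (σ : OSimplex P (k + 1))
    (i : Fin (k + 2)) : OSimplex P k :=
  ⟨σ.1 ∘ i.succAbove, σ.2.comp (Fin.strictMono_succAbove i)⟩

/-- Order `k`-cochains on the order complex of `P` with values in the system `G`: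
an assignment of an element of `G (top σ)` to every `k`-simplex `σ`. -/
abbrev Cochain (P : Type) [PartialOrder P] (G : P → Type) [∀ p, AddCommGroup (G p)]
    (k : ℕ) : Type :=
  ∀ σ : OSimplex P k, G σ.top

/-- The Čech-like coboundary operator on order cochains:
`(δφ)(p_0 ⋯ p_{k+1}) = ∑_{i=0}^{k} (-1)^i φ(p_0 ⋯ p̂_i ⋯ p_{k+1})
   + (-1)^{k+1} Φ(p_k, p_{k+1}) φ(p_0 ⋯ p_k)`,
written uniformly by pushing the value at the top vertex of each face into
`G (top σ)` along the structure maps (for a functorial system, the structure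
map along a reflexive inequality is the identity). -/
def deltaHom (P : Type) [PartialOrder P] (G : P → Type) [∀ p, AddCommGroup (G p)]
    (Φ : ∀ (p q : P), p ≤ q → G p →+ G q) (k : ℕ) :
    Cochain P G k →+ Cochain P G (k + 1) :=
  AddMonoidHom.mk'
    (fun φ σ => ∑ i : Fin (k + 2),
      ((-1 : ℤ) ^ (i : ℕ)) •
        Φ (σ.face i).top σ.top (σ.2.monotone (Fin.le_last _)) (φ (σ.face i)))
    (fun φ ψ => by
      funext σ
      simp only [Pi.add_apply, map_add, smul_add, Finset.sum_add_distrib])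

/-- The coboundaries: in degree `0` the trivial subgroup, in degree `k+1`
the image of `δ^k`. -/
def cobound (P : Type) [PartialOrder P] (G : P → Type) [∀ p, AddCommGroup (G p)]
    (Φ : ∀ (p q : P), p ≤ q → G p →+ G q) : (k : ℕ) → AddSubgroup (Cochain P G k)
  | 0 => ⊥
  | (k + 1) => (deltaHom P G Φ k).range

/-- Order cohomology: cocycles modulo coboundaries. -/
abbrev OH (P : Type) [PartialOrder P] (G : P → Type) [∀ p, AddCommGroup (G p)]
    (Φ : ∀ (p q : P), p ≤ q → G p →+ G q) (k : ℕ) : Type :=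
  (deltaHom P G Φ k).ker ⧸ (cobound P G Φ k).addSubgroupOf (deltaHom P G Φ k).ker

attribute [reducible] OSimplex.top

namespace DC
variable {P : Type} [PartialOrder P]

@[reducible] def vtx (q : P) : OSimplex P 0 :=
  ⟨fun _ => q, fun a b h => absurd h (by omega)⟩

@[reducible] def edge {a b : P} (h : a < b) : OSimplex P 1 :=
  ⟨![a, b], by
    intro i j hij
    fin_cases i <;> fin_cases j <;>
      first
      | exact absurd hij (by decide)
      | simpa using h⟩

@[reducible] def tri {a b c : P} (h1 : a < b) (h2 : b < c) : OSimplex P 2 :=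
  ⟨![a, b, c], by
    intro i j hij
    fin_cases i <;> fin_cases j <;>
      first
      | exact absurd hij (by decide)
      | simpa using h1
      | simpa using h2
      | simpa using h1.trans h2⟩

@[simp] lemma top_vtx (q : P) : (vtx q).top = q := rfl
@[simp] lemma top_edge {a b : P} (h : a < b) : (edge h).top = b := rfl
@[simp] lemma top_tri {a b c : P} (h1 : a < b) (h2 : b < c) : (tri h1 h2).top = c := rfl

lemma face_edge_zero {a b : P} (h : a < b) : (edge h).face 0 = vtx b :=
  Subtype.ext (funext fun i => by fin_cases i <;> rfl)
lemma face_edge_one {a b : P} (h : a < b) : (edge h).face 1 = vtx a :=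
  Subtype.ext (funext fun i => by fin_cases i <;> rfl)

lemma face_tri_zero {a b c : P} (h1 : a < b) (h2 : b < c) : (tri h1 h2).face 0 = edge h2 :=
  Subtype.ext (funext fun i => by fin_cases i <;> rfl)
lemma face_tri_one {a b c : P} (h1 : a < b) (h2 : b < c) :
    (tri h1 h2).face 1 = edge (h1.trans h2) :=
  Subtype.ext (funext fun i => by fin_cases i <;> rfl)
lemma face_tri_two {a b c : P} (h1 : a < b) (h2 : b < c) : (tri h1 h2).face 2 = edge h1 :=
  Subtype.ext (funext fun i => by fin_cases i <;> rfl)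

lemma vtx_eta (σ : OSimplex P 0) : σ = vtx σ.top :=
  Subtype.ext (funext fun i => by fin_cases i <;> rfl)
lemma edge_eta (σ : OSimplex P 1) : σ = edge (σ.2 (show (0 : Fin 2) < 1 by decide)) :=
  Subtype.ext (funext fun i => by fin_cases i <;> rfl)
lemma tri_eta (σ : OSimplex P 2) :
    σ = tri (σ.2 (show (0 : Fin 3) < 1 by decide)) (σ.2 (show (1 : Fin 3) < 2 by decide)) :=
  Subtype.ext (funext fun i => by fin_cases i <;> rfl)

end DC

namespace DC
open Classical

variable {P : Type} [PartialOrder P] {G : P → Type} [∀ p, AddCommGroup (G p)]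

lemma phi_congr (Φ : ∀ (p q : P), p ≤ q → G p →+ G q) {k : ℕ}
    (φ : Cochain P G k) {σ τ : OSimplex P k} (h : σ = τ) {t : P}
    (hσ : σ.top ≤ t) :
    Φ σ.top t hσ (φ σ) = Φ τ.top t (h ▸ hσ) (φ τ) := by subst h; rfl

lemma cochain_congr {G : P → Type} [∀ p, AddCommGroup (G p)] {k : ℕ}
    (φ : Cochain P G k) {σ τ : OSimplex P k} (h : σ = τ) : HEq (φ σ) (φ τ) := by
  subst h; rfl

section delta
variable (Φ : ∀ (p q : P), p ≤ q → G p →+ G q)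

lemma delta0_apply (φ : Cochain P G 0) {a b : P} (h : a < b) :
    deltaHom P G Φ 0 φ (edge h) =
      Φ b b (le_refl b) (φ (vtx b)) - Φ a b h.le (φ (vtx a)) := by
  show (∑ i : Fin 2, ((-1 : ℤ) ^ (i : ℕ)) •
      Φ ((edge h).face i).top (edge h).top _ (φ ((edge h).face i))) = _
  rw [Fin.sum_univ_two]
  erw [phi_congr Φ φ (face_edge_zero h), phi_congr Φ φ (face_edge_one h)]
  simp only [Fin.isValue, Fin.val_zero, Fin.val_one, pow_zero, pow_one, one_smul,
    neg_smul, one_zsmul, neg_zsmul, sub_eq_add_neg]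
  rfl

lemma delta1_apply (ψ : Cochain P G 1) {a b c : P} (h1 : a < b) (h2 : b < c) :
    deltaHom P G Φ 1 ψ (tri h1 h2) =
      Φ c c (le_refl c) (ψ (edge h2)) - Φ c c (le_refl c) (ψ (edge (h1.trans h2)))
        + Φ b c h2.le (ψ (edge h1)) := by
  show (∑ i : Fin 3, ((-1 : ℤ) ^ (i : ℕ)) •
      Φ ((tri h1 h2).face i).top (tri h1 h2).top _ (ψ ((tri h1 h2).face i))) = _
  rw [Fin.sum_univ_three]
  erw [phi_congr Φ ψ (face_tri_zero h1 h2), phi_congr Φ ψ (face_tri_one h1 h2),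
    phi_congr Φ ψ (face_tri_two h1 h2)]
  simp only [Fin.isValue, Fin.val_zero, Fin.val_one, Fin.val_two, pow_zero, pow_one,
    neg_one_sq, one_smul, neg_smul, one_zsmul, neg_zsmul, sub_eq_add_neg]
  erw [sub_eq_add_neg]
  rfl

end delta
end DC

namespace DC

def below {P : Type} [PartialOrder P] (p : P) : Set P := {q | q ≤ p}

variable {P : Type} [PartialOrder P] {G : P → Type} [∀ p, AddCommGroup (G p)] {p : P}

lemma mem_below {q : P} : q ∈ below p ↔ q ≤ p := Iff.rfl

@[reducible] def ιS {k : ℕ} (τ : OSimplex (below p) k) : OSimplex P k :=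
  ⟨fun i => (τ.1 i).1, fun a b h => Subtype.coe_lt_coe.2 (τ.2 h)⟩

@[reducible] def toS {k : ℕ} (σ : OSimplex P k) (hb : σ.top ≤ p) : OSimplex (below p) k :=
  ⟨fun i => ⟨σ.1 i, (σ.2.monotone (Fin.le_last i)).trans hb⟩,
   fun a b h => Subtype.mk_lt_mk.2 (σ.2 h)⟩

lemma ιS_toS {k : ℕ} (σ : OSimplex P k) (hb : σ.top ≤ p) : ιS (toS σ hb) = σ := rfl

lemma toS_ιS {k : ℕ} (τ : OSimplex (below p) k) (hb : (ιS τ).top ≤ p) :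
    toS (ιS τ) hb = τ := rfl

def res (G : P → Type) [∀ p, AddCommGroup (G p)] (p : P) (k : ℕ) :
    Cochain P G k →+ Cochain (below p) (fun x => G x.1) k :=
  AddMonoidHom.mk' (fun φ τ => φ (ιS τ)) (fun _ _ => rfl)

lemma res_delta (Φ : ∀ (p q : P), p ≤ q → G p →+ G q) (k : ℕ) (φ : Cochain P G k) :
    res G p (k + 1) (deltaHom P G Φ k φ) =
      deltaHom (below p) (fun x => G x.1) (fun x y h => Φ x.1 y.1 h) k (res G p k φ) := rfl

end DC

namespace DC
variable {P : Type} [PartialOrder P] {G : P → Type} [∀ p, AddCommGroup (G p)] {p : P}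

lemma ιS_vtx (x : below p) : ιS (vtx x) = vtx x.1 := rfl

lemma ιS_edge {x y : below p} (h : x < y) :
    ιS (edge h) = edge (Subtype.coe_lt_coe.2 h) :=
  Subtype.ext (funext fun i => by fin_cases i <;> rfl)

lemma toS_vtx (q : P) (hq : (vtx q).top ≤ p) : toS (vtx q) hq = vtx ⟨q, hq⟩ := rfl

lemma toS_edge {a b : P} (h : a < b) (hb : (edge h).top ≤ p) :
    toS (edge h) hb = edge (Subtype.mk_lt_mk.2 h :
      (⟨a, h.le.trans hb⟩ : below p) < ⟨b, hb⟩) :=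
  Subtype.ext (funext fun i => by fin_cases i <;> rfl)

end DC

namespace DC
open Classical

variable {P : Type} [PartialOrder P] {G : P → Type} [∀ p, AddCommGroup (G p)]

section ext
variable (Φ : ∀ (p q : P), p ≤ q → G p →+ G q) (p : P)
  (hcomp : ∀ q : P, q ≤ p ∨ p ≤ q)

open Classical in
/-- Extension of a 0-cochain from `below p` to `P`. -/
noncomputable def E0 (w : Cochain (below p) (fun x => G x.1) 0) : Cochain P G 0 :=
  fun σ =>
    if h : σ.top ≤ p then w (toS σ h)
    else Φ p σ.top ((hcomp σ.top).resolve_left h) (w (vtx (⟨p, le_refl p⟩ : below p)))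

open Classical in
/-- Extension of a 1-cochain from `below p` to `P`. -/
noncomputable def E1 (ψ : Cochain (below p) (fun x => G x.1) 1) : Cochain P G 1 :=
  fun σ =>
    if hb : σ.top ≤ p then ψ (toS σ hb)
    else if ha : σ.1 0 < p then
      Φ p σ.top ((hcomp σ.top).resolve_left hb)
        (ψ (edge (Subtype.mk_lt_mk.2 ha :
          (⟨σ.1 0, ha.le⟩ : below p) < ⟨p, le_refl p⟩)))
    else 0

open Classical in
/-- The homotopy 0-cochain attached to a 1-cochain. -/
noncomputable def uex (φ : Cochain P G 1) : Cochain P G 0 :=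
  fun σ => if h : p < σ.top then Φ σ.top σ.top (le_refl _) (φ (edge h)) else 0

variable {Φ p}

lemma E0_le (w : Cochain (below p) (fun x => G x.1) 0) {q : P} (hq : q ≤ p) :
    E0 Φ p hcomp w (vtx q) = w (vtx (⟨q, hq⟩ : below p)) := by
  unfold E0
  rw [dif_pos (show (vtx q).top ≤ p from hq)]

lemma E0_gt (w : Cochain (below p) (fun x => G x.1) 0) {q : P} (hq : ¬ q ≤ p) :
    E0 Φ p hcomp w (vtx q) =
      Φ p q ((hcomp q).resolve_left hq) (w (vtx (⟨p, le_refl p⟩ : below p))) := by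
  unfold E0
  rw [dif_neg (show ¬ (vtx q).top ≤ p from hq)]

lemma E1_le (ψ : Cochain (below p) (fun x => G x.1) 1) {a b : P} (h : a < b)
    (hb : b ≤ p) :
    E1 Φ p hcomp ψ (edge h) =
      ψ (edge (Subtype.mk_lt_mk.2 h : (⟨a, h.le.trans hb⟩ : below p) < ⟨b, hb⟩)) := by
  unfold E1
  rw [dif_pos (show (edge h).top ≤ p from hb)]
  exact eq_of_heq (cochain_congr ψ (toS_edge h hb))

lemma E1_mixed (ψ : Cochain (below p) (fun x => G x.1) 1) {a b : P} (h : a < b)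
    (hb : ¬ b ≤ p) (ha : a < p) :
    E1 Φ p hcomp ψ (edge h) =
      Φ p b ((hcomp b).resolve_left hb)
        (ψ (edge (Subtype.mk_lt_mk.2 ha : (⟨a, ha.le⟩ : below p) < ⟨p, le_refl p⟩))) := by
  unfold E1
  rw [dif_neg (show ¬ (edge h).top ≤ p from hb), dif_pos (show (edge h).1 0 < p from ha)]
  rfl

lemma E1_zero (ψ : Cochain (below p) (fun x => G x.1) 1) {a b : P} (h : a < b)
    (hb : ¬ b ≤ p) (ha : ¬ a < p) :
    E1 Φ p hcomp ψ (edge h) = 0 := by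
  unfold E1
  rw [dif_neg (show ¬ (edge h).top ≤ p from hb), dif_neg (show ¬ (edge h).1 0 < p from ha)]

variable (p) in
lemma u_pos (φ : Cochain P G 1) {q : P} (hq : p < q) :
    uex Φ p φ (vtx q) = Φ q q (le_refl q) (φ (edge hq)) := by
  unfold uex
  rw [dif_pos (show p < (vtx q).top from hq)]

variable (p) in
lemma u_neg (φ : Cochain P G 1) {q : P} (hq : ¬ p < q) :
    uex Φ p φ (vtx q) = 0 := by
  unfold uex
  rw [dif_neg (show ¬ p < (vtx q).top from hq)]

end ext
end DC

namespace DC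
variable {P : Type} [PartialOrder P] {G : P → Type} [∀ p, AddCommGroup (G p)]
variable {Φ : ∀ (p q : P), p ≤ q → G p →+ G q} {p : P}

lemma not_le_lt (hcomp : ∀ q : P, q ≤ p ∨ p ≤ q) {b : P} (hb : ¬ b ≤ p) : p < b :=
  lt_of_le_of_ne ((hcomp b).resolve_left hb) (fun e => hb (le_of_eq e.symm))

lemma res_edge (φ : Cochain P G 1) {x y : below p} (k : x < y) :
    res G p 1 φ (edge k) = φ (edge (Subtype.coe_lt_coe.2 k)) :=
  eq_of_heq (cochain_congr φ (ιS_edge k))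

lemma res_vtx (φ : Cochain P G 0) (x : below p) :
    res G p 0 φ (vtx x) = φ (vtx x.1) :=
  eq_of_heq (cochain_congr φ (ιS_vtx x))

/-- Extension of a 1-cocycle is a 1-cocycle. -/
lemma delta_E1
    (hrefl : ∀ (p : P) (x : G p), Φ p p le_rfl x = x)
    (htrans : ∀ (p q r : P) (h₁ : p ≤ q) (h₂ : q ≤ r) (x : G p),
      Φ q r h₂ (Φ p q h₁ x) = Φ p r (h₁.trans h₂) x)
    (hcomp : ∀ q : P, q ≤ p ∨ p ≤ q)
    (ψ : Cochain (below p) (fun x => G x.1) 1)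
    (hψ : deltaHom (below p) (fun x => G x.1) (fun x y h => Φ x.1 y.1 h) 1 ψ = 0) :
    deltaHom P G Φ 1 (E1 Φ p hcomp ψ) = 0 := by
  have key : ∀ {a b c : P} (h1 : a < b) (h2 : b < c),
      deltaHom P G Φ 1 (E1 Φ p hcomp ψ) (tri h1 h2) = 0 := by
    intro a b c h1 h2
    have hzS : ∀ {x y z : below p} (k1 : x < y) (k2 : y < z),
        Φ z.1 z.1 (le_refl z.1) (ψ (edge k2))
          - Φ z.1 z.1 (le_refl z.1) (ψ (edge (k1.trans k2)))
          + Φ y.1 z.1 (Subtype.coe_lt_coe.2 k2).le (ψ (edge k1)) = 0 := by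
      intro x y z k1 k2
      have h0 : deltaHom (below p) (fun x => G x.1) (fun x y h => Φ x.1 y.1 h) 1 ψ
          (tri k1 k2) = 0 := by rw [hψ]; rfl
      rw [delta1_apply] at h0
      exact h0
    by_cases hc : c ≤ p
    · have hb : b ≤ p := h2.le.trans hc
      rw [delta1_apply]
      rw [E1_le hcomp ψ h2 hc, E1_le hcomp ψ (h1.trans h2) hc, E1_le hcomp ψ h1 hb]
      exact hzS (Subtype.mk_lt_mk.2 h1 : (⟨a, h1.le.trans hb⟩ : below p) < ⟨b, hb⟩)
        (Subtype.mk_lt_mk.2 h2 : (⟨b, hb⟩ : below p) < ⟨c, hc⟩)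
    · by_cases hb : b ≤ p
      · rcases hb.lt_or_eq with hblt | hbeq
        · -- a < b < p < c
          have ha : a < p := h1.trans hblt
          rw [delta1_apply]
          rw [E1_mixed hcomp ψ h2 hc hblt, E1_mixed hcomp ψ (h1.trans h2) hc ha,
            E1_le hcomp ψ h1 hb]
          erw [htrans p c c, htrans p c c, ← htrans b p c hblt.le ((hcomp c).resolve_left hc),
            ← map_sub, ← map_add]
          have hz := hzS (Subtype.mk_lt_mk.2 h1 : (⟨a, h1.le.trans hb⟩ : below p) < ⟨b, hb⟩)
            (Subtype.mk_lt_mk.2 hblt : (⟨b, hb⟩ : below p) < ⟨p, le_refl p⟩)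
          erw [hrefl, hrefl] at hz
          have := congrArg (Φ p c (((hcomp c).resolve_left hc).trans (le_refl c))) hz
          rw [map_zero] at this
          exact this
        · -- a < b = p < c
          have h1' : a < p := hbeq ▸ h1
          have h2' : p < c := hbeq ▸ h2
          have e : tri h1 h2 = tri h1' h2' :=
            Subtype.ext (funext fun i => by fin_cases i <;> simp [hbeq])
          rw [show deltaHom P G Φ 1 (E1 Φ p hcomp ψ) (tri h1 h2)
              = deltaHom P G Φ 1 (E1 Φ p hcomp ψ) (tri h1' h2') from
            eq_of_heq (cochain_congr _ e)]
          rw [delta1_apply]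
          rw [E1_zero hcomp ψ h2' hc (lt_irrefl p), E1_mixed hcomp ψ (h1'.trans h2') hc h1',
            E1_le hcomp ψ h1' le_rfl]
          erw [map_zero, htrans p c c, zero_sub, neg_add_eq_zero]
        -- p < b < c cases
      · have hpb : ¬ b < p := fun hlt => hlt.not_ge ((hcomp b).resolve_left hb)
        by_cases ha : a < p
        · -- a < p < b < c
          rw [delta1_apply]
          rw [E1_zero hcomp ψ h2 hc hpb, E1_mixed hcomp ψ (h1.trans h2) hc ha,
            E1_mixed hcomp ψ h1 hb ha]
          erw [map_zero, htrans p c c, htrans p b c, zero_sub, neg_add_eq_zero]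
        · -- p ≤ a < b < c
          rw [delta1_apply]
          rw [E1_zero hcomp ψ h2 hc hpb, E1_zero hcomp ψ (h1.trans h2) hc ha,
            E1_zero hcomp ψ h1 hb ha]
          erw [map_zero, map_zero]; simp; rfl
  funext σ
  exact eq_of_heq ((cochain_congr _ (tri_eta σ)).trans (heq_of_eq (key _ _)))
end DC

namespace DC
variable {P : Type} [PartialOrder P] {G : P → Type} [∀ p, AddCommGroup (G p)]
variable {Φ : ∀ (p q : P), p ≤ q → G p →+ G q} {p : P}

lemma res_E1 (hcomp : ∀ q : P, q ≤ p ∨ p ≤ q) (ψ : Cochain (below p) (fun x => G x.1) 1) :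
    res G p 1 (E1 Φ p hcomp ψ) = ψ := by
  funext τ
  show E1 Φ p hcomp ψ (ιS τ) = ψ τ
  unfold E1
  rw [dif_pos (show (ιS τ).top ≤ p from (τ.1 (Fin.last 1)).2)]
  exact eq_of_heq (cochain_congr ψ (toS_ιS τ _))

lemma res_E0 (hcomp : ∀ q : P, q ≤ p ∨ p ≤ q) (w : Cochain (below p) (fun x => G x.1) 0) :
    res G p 0 (E0 Φ p hcomp w) = w := by
  funext τ
  show E0 Φ p hcomp w (ιS τ) = w τ
  unfold E0
  rw [dif_pos (show (ιS τ).top ≤ p from (τ.1 (Fin.last 0)).2)]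
  exact eq_of_heq (cochain_congr w (toS_ιS τ _))

lemma E1_delta0
    (hrefl : ∀ (p : P) (x : G p), Φ p p le_rfl x = x)
    (htrans : ∀ (p q r : P) (h₁ : p ≤ q) (h₂ : q ≤ r) (x : G p),
      Φ q r h₂ (Φ p q h₁ x) = Φ p r (h₁.trans h₂) x)
    (hcomp : ∀ q : P, q ≤ p ∨ p ≤ q)
    (w : Cochain (below p) (fun x => G x.1) 0) :
    E1 Φ p hcomp (deltaHom (below p) (fun x => G x.1) (fun x y h => Φ x.1 y.1 h) 0 w)
      = deltaHom P G Φ 0 (E0 Φ p hcomp w) := by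
  set ψ := deltaHom (below p) (fun x => G x.1) (fun x y h => Φ x.1 y.1 h) 0 w with hψdef
  have key : ∀ {a b : P} (h : a < b),
      E1 Φ p hcomp ψ (edge h) = deltaHom P G Φ 0 (E0 Φ p hcomp w) (edge h) := by
    intro a b h
    by_cases hb : b ≤ p
    · rw [E1_le hcomp ψ h hb, hψdef, delta0_apply, delta0_apply Φ (E0 Φ p hcomp w) h,
        E0_le hcomp w hb, E0_le hcomp w (h.le.trans hb)]
    · by_cases ha : a < p
      · rw [E1_mixed hcomp ψ h hb ha, hψdef, delta0_apply, map_sub,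
          delta0_apply Φ (E0 Φ p hcomp w) h, E0_gt hcomp w hb, E0_le hcomp w ha.le,
          htrans p p b, htrans a p b, htrans p b b]
      · by_cases hale : a ≤ p
        · have haeq : a = p := by
            rcases hale.lt_or_eq with h' | h'
            · exact absurd h' ha
            · exact h'
          have h' : p < b := haeq ▸ h
          have e : edge h = edge h' :=
            Subtype.ext (funext fun i => by fin_cases i <;> simp [haeq])
          rw [show E1 Φ p hcomp ψ (edge h) = E1 Φ p hcomp ψ (edge h') from
              eq_of_heq (cochain_congr _ e),
            show deltaHom P G Φ 0 (E0 Φ p hcomp w) (edge h)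
              = deltaHom P G Φ 0 (E0 Φ p hcomp w) (edge h') from
              eq_of_heq (cochain_congr _ e)]
          rw [E1_zero hcomp ψ h' hb (lt_irrefl p),
            delta0_apply Φ (E0 Φ p hcomp w) h', E0_gt hcomp w hb,
            E0_le hcomp w (le_refl p), htrans p b b, sub_self]
          rfl
        · have hpa : p ≤ a := (hcomp a).resolve_left hale
          rw [E1_zero hcomp ψ h hb ha, delta0_apply Φ (E0 Φ p hcomp w) h,
            E0_gt hcomp w hb, E0_gt hcomp w hale, htrans p b b, htrans p a b, sub_self]
          rfl
  funext σ
  exact eq_of_heq (((cochain_congr _ (edge_eta σ)).trans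
    (heq_of_eq (key _))).trans
      (cochain_congr (deltaHom P G Φ 0 (E0 Φ p hcomp w)) (edge_eta σ)).symm)
end DC

namespace DC
variable {P : Type} [PartialOrder P] {G : P → Type} [∀ p, AddCommGroup (G p)]
variable {Φ : ∀ (p q : P), p ≤ q → G p →+ G q} {p : P}

/-- A 0-cocycle on `P` is recovered from its restriction. -/
lemma E0_res
    (hrefl : ∀ (p : P) (x : G p), Φ p p le_rfl x = x)
    (hcomp : ∀ q : P, q ≤ p ∨ p ≤ q)
    (φ : Cochain P G 0) (hφ : deltaHom P G Φ 0 φ = 0) :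
    E0 Φ p hcomp (res G p 0 φ) = φ := by
  have key : ∀ (q : P), E0 Φ p hcomp (res G p 0 φ) (vtx q) = φ (vtx q) := by
    intro q
    by_cases hq : q ≤ p
    · rw [E0_le hcomp _ hq, res_vtx]
    · have hpq : p < q := not_le_lt hcomp hq
      rw [E0_gt hcomp _ hq, res_vtx]
      have h0 : deltaHom P G Φ 0 φ (edge hpq) = 0 := by rw [hφ]; rfl
      rw [delta0_apply] at h0
      have h1 : Φ q q (le_refl q) (φ (vtx q)) = Φ p q hpq.le (φ (vtx p)) :=
        sub_eq_zero.1 h0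
      rw [hrefl] at h1
      exact h1.symm
  funext σ
  exact eq_of_heq (((cochain_congr _ (vtx_eta σ)).trans
    (heq_of_eq (key _))).trans (cochain_congr _ (vtx_eta σ)).symm)

/-- A 1-cocycle on `P` differs from the extension of its restriction by the
coboundary of `uex`. -/
lemma E1_res
    (hrefl : ∀ (p : P) (x : G p), Φ p p le_rfl x = x)
    (htrans : ∀ (p q r : P) (h₁ : p ≤ q) (h₂ : q ≤ r) (x : G p),
      Φ q r h₂ (Φ p q h₁ x) = Φ p r (h₁.trans h₂) x)
    (hcomp : ∀ q : P, q ≤ p ∨ p ≤ q)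
    (φ : Cochain P G 1) (hφ : deltaHom P G Φ 1 φ = 0) :
    E1 Φ p hcomp (res G p 1 φ) = φ - deltaHom P G Φ 0 (uex Φ p φ) := by
  have key : ∀ {a b : P} (h : a < b),
      E1 Φ p hcomp (res G p 1 φ) (edge h)
        = φ (edge h) - deltaHom P G Φ 0 (uex Φ p φ) (edge h) := by
    intro a b h
    rw [delta0_apply Φ (uex Φ p φ) h]
    by_cases hb : b ≤ p
    · rw [E1_le hcomp _ h hb, res_edge,
        u_neg p φ (fun hlt => lt_irrefl p (hlt.trans_le hb)),
        u_neg p φ (fun hlt => lt_irrefl p (hlt.trans_le (h.le.trans hb)))]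
      simp only [map_zero, sub_zero]
      exact (sub_zero _).symm
    · have hpb : p < b := not_le_lt hcomp hb
      by_cases ha : a < p
      · rw [E1_mixed hcomp _ h hb ha, res_edge, u_pos p φ hpb, u_neg p φ (lt_asymm ha)]
        simp only [map_zero, sub_zero]
        erw [htrans b b b]
        erw [hrefl]
        have h0 : deltaHom P G Φ 1 φ (tri ha hpb) = 0 := by rw [hφ]; rfl
        rw [delta1_apply] at h0
        rw [sub_add_eq_add_sub] at h0
        have h4 := sub_eq_zero.1 h0
        have h3 := eq_sub_of_add_eq' h4
        erw [hrefl, hrefl] at h3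
        exact h3
      · by_cases hale : a ≤ p
        · have haeq : a = p := by
            rcases hale.lt_or_eq with h' | h'
            · exact absurd h' ha
            · exact h'
          have h' : p < b := haeq ▸ h
          have e : edge h = edge h' :=
            Subtype.ext (funext fun i => by fin_cases i <;> simp [haeq])
          rw [show E1 Φ p hcomp (res G p 1 φ) (edge h)
              = E1 Φ p hcomp (res G p 1 φ) (edge h') from eq_of_heq (cochain_congr _ e),
            show (φ (edge h) : G (edge h).top) = φ (edge h') from
              eq_of_heq (cochain_congr _ e),
            show Φ a b h.le (uex Φ p φ (vtx a)) = Φ p b h'.le (uex Φ p φ (vtx p)) from by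
              subst haeq; rfl]
          erw [E1_zero hcomp _ h' hb (lt_irrefl p), u_pos p φ h',
            u_neg p φ (lt_irrefl p), map_zero, sub_zero, htrans b b b]
          erw [hrefl]
          exact (sub_self _).symm
        · have hpa : p < a := not_le_lt hcomp hale
          erw [E1_zero hcomp _ h hb ha, u_pos p φ hpb, u_pos p φ hpa,
            htrans b b b, htrans a a b]
          erw [sub_sub_eq_add_sub]
          have h0 : deltaHom P G Φ 1 φ (tri hpa h) = 0 := by rw [hφ]; rfl
          rw [delta1_apply] at h0
          rw [sub_add_eq_add_sub] at h0
          erw [hrefl, hrefl] at h0; erw [hrefl]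
          exact h0.symm
  funext σ
  exact eq_of_heq (((cochain_congr _ (edge_eta σ)).trans
    (heq_of_eq (key _))).trans
      (cochain_congr (φ - deltaHom P G Φ 0 (uex Φ p φ)) (edge_eta σ)).symm)
end DC

namespace DC
variable {P : Type} [PartialOrder P] {G : P → Type} [∀ p, AddCommGroup (G p)]
variable {Φ : ∀ (p q : P), p ≤ q → G p →+ G q} {p : P}

lemma E1_add (hcomp : ∀ q : P, q ≤ p ∨ p ≤ q)
    (ψ ψ' : Cochain (below p) (fun x => G x.1) 1) :
    E1 Φ p hcomp (ψ + ψ') = E1 Φ p hcomp ψ + E1 Φ p hcomp ψ' := by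
  funext σ
  show E1 Φ p hcomp (ψ + ψ') σ = E1 Φ p hcomp ψ σ + E1 Φ p hcomp ψ' σ
  unfold E1
  split_ifs <;> simp [Pi.add_apply, map_add] <;> exact map_add _ _ _

lemma E0_add (hcomp : ∀ q : P, q ≤ p ∨ p ≤ q)
    (w w' : Cochain (below p) (fun x => G x.1) 0) :
    E0 Φ p hcomp (w + w') = E0 Φ p hcomp w + E0 Φ p hcomp w' := by
  funext σ
  show E0 Φ p hcomp (w + w') σ = E0 Φ p hcomp w σ + E0 Φ p hcomp w' σ
  unfold E0
  split_ifs <;> simp [Pi.add_apply, map_add]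

lemma E1_map_zero (hcomp : ∀ q : P, q ≤ p ∨ p ≤ q) :
    E1 Φ p hcomp (0 : Cochain (below p) (fun x => G x.1) 1) = 0 := by
  funext σ
  show E1 Φ p hcomp 0 σ = 0
  unfold E1
  split_ifs <;> simp <;> exact map_zero _

/-- Extension of a 0-cocycle is a 0-cocycle. -/
lemma delta_E0
    (hrefl : ∀ (p : P) (x : G p), Φ p p le_rfl x = x)
    (htrans : ∀ (p q r : P) (h₁ : p ≤ q) (h₂ : q ≤ r) (x : G p),
      Φ q r h₂ (Φ p q h₁ x) = Φ p r (h₁.trans h₂) x)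
    (hcomp : ∀ q : P, q ≤ p ∨ p ≤ q)
    (w : Cochain (below p) (fun x => G x.1) 0)
    (hw : deltaHom (below p) (fun x => G x.1) (fun x y h => Φ x.1 y.1 h) 0 w = 0) :
    deltaHom P G Φ 0 (E0 Φ p hcomp w) = 0 := by
  rw [← E1_delta0 hrefl htrans hcomp w, hw, E1_map_zero]
end DC

namespace DC
variable {P : Type} [PartialOrder P] {G : P → Type} [∀ p, AddCommGroup (G p)]

/-- The degree-1 isomorphism. -/
noncomputable def equiv1 (Φ : ∀ (p q : P), p ≤ q → G p →+ G q) (p : P)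
    (hrefl : ∀ (p : P) (x : G p), Φ p p le_rfl x = x)
    (htrans : ∀ (p q r : P) (h₁ : p ≤ q) (h₂ : q ≤ r) (x : G p),
      Φ q r h₂ (Φ p q h₁ x) = Φ p r (h₁.trans h₂) x)
    (hcomp : ∀ q : P, q ≤ p ∨ p ≤ q) :
    OH P G Φ 1 ≃+ OH (below p) (fun x => G x.1) (fun x y h => Φ x.1 y.1 h) 1 := by
  classical
  set Φ' : ∀ (x y : below p), x ≤ y → G x.1 →+ G y.1 := fun x y h => Φ x.1 y.1 h with hΦ'
  -- restriction on cocycles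
  refine
    let Rker : (deltaHom P G Φ 1).ker →+ (deltaHom (below p) (fun x => G x.1) Φ' 1).ker :=
      AddMonoidHom.codRestrict ((res G p 1).comp (deltaHom P G Φ 1).ker.subtype) _
        (fun x => by
          have hx : deltaHom P G Φ 1 x.1 = 0 := x.2
          simp only [AddMonoidHom.mem_ker, AddMonoidHom.coe_comp, Function.comp_apply,
            AddSubgroup.coe_subtype]
          rw [← res_delta Φ 1 x.1, hx]
          exact map_zero _)
    let Eker : (deltaHom (below p) (fun x => G x.1) Φ' 1).ker →+ (deltaHom P G Φ 1).ker :=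
      AddMonoidHom.mk' (fun ψ => ⟨E1 Φ p hcomp ψ.1, delta_E1 hrefl htrans hcomp ψ.1 ψ.2⟩)
        (fun ψ ψ' => Subtype.ext (E1_add hcomp ψ.1 ψ'.1))
    ?_
  have hfwd : ((cobound P G Φ 1).addSubgroupOf (deltaHom P G Φ 1).ker) ≤
      (((cobound (below p) (fun x => G x.1) Φ' 1).addSubgroupOf
        (deltaHom (below p) (fun x => G x.1) Φ' 1).ker)).comap Rker := by
    intro x hx
    rw [AddSubgroup.mem_addSubgroupOf] at hx
    obtain ⟨v, hv⟩ := hx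
    rw [AddSubgroup.mem_comap, AddSubgroup.mem_addSubgroupOf]
    exact ⟨res G p 0 v, by
      show deltaHom _ _ Φ' 0 (res G p 0 v) = res G p 1 x.1
      rw [← res_delta Φ 0 v, hv]⟩
  have hbwd : ((cobound (below p) (fun x => G x.1) Φ' 1).addSubgroupOf
        (deltaHom (below p) (fun x => G x.1) Φ' 1).ker) ≤
      ((cobound P G Φ 1).addSubgroupOf (deltaHom P G Φ 1).ker).comap Eker := by
    intro ψ hψ
    rw [AddSubgroup.mem_addSubgroupOf] at hψ
    obtain ⟨w, hw⟩ := hψ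
    rw [AddSubgroup.mem_comap, AddSubgroup.mem_addSubgroupOf]
    exact ⟨E0 Φ p hcomp w, by
      show deltaHom P G Φ 0 (E0 Φ p hcomp w) = E1 Φ p hcomp ψ.1
      rw [← E1_delta0 hrefl htrans hcomp w]
      rw [show deltaHom _ _ (fun x y h => Φ x.1 y.1 h) 0 w = ψ.1 from hw]⟩
  refine
    { toFun := QuotientAddGroup.map _ _ Rker hfwd
      invFun := QuotientAddGroup.map _ _ Eker hbwd
      left_inv := ?_
      right_inv := ?_
      map_add' := (QuotientAddGroup.map _ _ Rker hfwd).map_add }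
  · intro x
    refine QuotientAddGroup.induction_on x (fun φ => ?_)
    rw [QuotientAddGroup.map_mk, QuotientAddGroup.map_mk]
    rw [QuotientAddGroup.eq]
    rw [AddSubgroup.mem_addSubgroupOf]
    refine ⟨uex Φ p φ.1, ?_⟩
    show deltaHom P G Φ 0 (uex Φ p φ.1) = _
    have hE := E1_res hrefl htrans hcomp φ.1 φ.2
    show deltaHom P G Φ 0 (uex Φ p φ.1) = -(E1 Φ p hcomp (res G p 1 φ.1)) + φ.1
    rw [hE]
    abel
  · intro y
    refine QuotientAddGroup.induction_on y (fun ψ => ?_)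
    rw [QuotientAddGroup.map_mk, QuotientAddGroup.map_mk]
    congr 1
    exact Subtype.ext (res_E1 hcomp ψ.1)
end DC

namespace DC
variable {P : Type} [PartialOrder P] {G : P → Type} [∀ p, AddCommGroup (G p)]

/-- The degree-0 isomorphism. -/
noncomputable def equiv0 (Φ : ∀ (p q : P), p ≤ q → G p →+ G q) (p : P)
    (hrefl : ∀ (p : P) (x : G p), Φ p p le_rfl x = x)
    (htrans : ∀ (p q r : P) (h₁ : p ≤ q) (h₂ : q ≤ r) (x : G p),
      Φ q r h₂ (Φ p q h₁ x) = Φ p r (h₁.trans h₂) x)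
    (hcomp : ∀ q : P, q ≤ p ∨ p ≤ q) :
    OH P G Φ 0 ≃+ OH (below p) (fun x => G x.1) (fun x y h => Φ x.1 y.1 h) 0 := by
  classical
  set Φ' : ∀ (x y : below p), x ≤ y → G x.1 →+ G y.1 := fun x y h => Φ x.1 y.1 h with hΦ'
  refine
    let Rker : (deltaHom P G Φ 0).ker →+ (deltaHom (below p) (fun x => G x.1) Φ' 0).ker :=
      AddMonoidHom.codRestrict ((res G p 0).comp (deltaHom P G Φ 0).ker.subtype) _
        (fun x => by
          have hx : deltaHom P G Φ 0 x.1 = 0 := x.2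
          simp only [AddMonoidHom.mem_ker, AddMonoidHom.coe_comp, Function.comp_apply,
            AddSubgroup.coe_subtype]
          rw [← res_delta Φ 0 x.1, hx]
          exact map_zero _)
    let Eker : (deltaHom (below p) (fun x => G x.1) Φ' 0).ker →+ (deltaHom P G Φ 0).ker :=
      AddMonoidHom.mk' (fun w => ⟨E0 Φ p hcomp w.1, delta_E0 hrefl htrans hcomp w.1 w.2⟩)
        (fun w w' => Subtype.ext (E0_add hcomp w.1 w'.1))
    ?_
  have hfwd : ((cobound P G Φ 0).addSubgroupOf (deltaHom P G Φ 0).ker) ≤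
      (((cobound (below p) (fun x => G x.1) Φ' 0).addSubgroupOf
        (deltaHom (below p) (fun x => G x.1) Φ' 0).ker)).comap Rker := by
    intro x hx
    rw [AddSubgroup.mem_addSubgroupOf] at hx
    have hx0 : x.1 = 0 := hx
    rw [AddSubgroup.mem_comap, AddSubgroup.mem_addSubgroupOf]
    show res G p 0 x.1 ∈ (⊥ : AddSubgroup _)
    rw [hx0, map_zero]
    exact AddSubgroup.zero_mem _
  have hbwd : ((cobound (below p) (fun x => G x.1) Φ' 0).addSubgroupOf
        (deltaHom (below p) (fun x => G x.1) Φ' 0).ker) ≤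
      ((cobound P G Φ 0).addSubgroupOf (deltaHom P G Φ 0).ker).comap Eker := by
    intro w hw
    rw [AddSubgroup.mem_addSubgroupOf] at hw
    have hw0 : w.1 = 0 := hw
    rw [AddSubgroup.mem_comap, AddSubgroup.mem_addSubgroupOf]
    show E0 Φ p hcomp w.1 ∈ (⊥ : AddSubgroup _)
    rw [hw0]
    rw [show E0 Φ p hcomp (0 : Cochain (below p) (fun x => G x.1) 0) = 0 from by
      have := E0_add (Φ := Φ) hcomp (0 : Cochain (below p) (fun x => G x.1) 0) 0
      rw [add_zero] at this
      exact (left_eq_add.1 this)]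
    exact AddSubgroup.zero_mem _
  refine
    { toFun := QuotientAddGroup.map _ _ Rker hfwd
      invFun := QuotientAddGroup.map _ _ Eker hbwd
      left_inv := ?_
      right_inv := ?_
      map_add' := (QuotientAddGroup.map _ _ Rker hfwd).map_add }
  · intro x
    refine QuotientAddGroup.induction_on x (fun φ => ?_)
    rw [QuotientAddGroup.map_mk, QuotientAddGroup.map_mk]
    congr 1
    exact Subtype.ext (E0_res hrefl hcomp φ.1 φ.2)
  · intro y
    refine QuotientAddGroup.induction_on y (fun w => ?_)
    rw [QuotientAddGroup.map_mk, QuotientAddGroup.map_mk]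
    congr 1
    exact Subtype.ext (res_E0 hcomp w.1)
end DC

/-- double cone. Let `P` be a poset that is the union of two
subposets `Δ₁`, `Δ₂` intersecting in exactly one element `p`, where `p` is
simultaneously the unique minimal element of `Δ₁` and the unique maximal element
of `Δ₂`.  Then for any directed system `G` of abelian groups over `P`,
`H^1(or(P); G) ≅ H^1(or(Δ₂); G)`; and if `G` consists of (rational) vector
spaces, then also `H^0(or(P); G) ≅ H^0(or(Δ₂); G)`. -/
theorem doubleCone_orderCohomology (P : Type) [PartialOrder P]
    (G : P → Type) [∀ p, AddCommGroup (G p)]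
    (Φ : ∀ (p q : P), p ≤ q → G p →+ G q)
    (hrefl : ∀ (p : P) (x : G p), Φ p p le_rfl x = x)
    (htrans : ∀ (p q r : P) (h₁ : p ≤ q) (h₂ : q ≤ r) (x : G p),
      Φ q r h₂ (Φ p q h₁ x) = Φ p r (h₁.trans h₂) x)
    (Δ₁ Δ₂ : Set P) (p : P)
    (hcover : Δ₁ ∪ Δ₂ = Set.univ)
    (hmeet : Δ₁ ∩ Δ₂ = {p})
    (hmin : ∀ x ∈ Δ₁, p ≤ x)
    (hmax : ∀ x ∈ Δ₂, x ≤ p) :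
    Nonempty (OH P G Φ 1 ≃+ OH Δ₂ (fun x => G x.1) (fun x y h => Φ x.1 y.1 h) 1) ∧
      ((∀ q : P, Module ℚ (G q)) →
        Nonempty (OH P G Φ 0 ≃+ OH Δ₂ (fun x => G x.1) (fun x y h => Φ x.1 y.1 h) 0)) := by
  have hp2 : p ∈ Δ₂ := by
    have : p ∈ Δ₁ ∩ Δ₂ := by rw [hmeet]; exact rfl
    exact this.2
  have hS : Δ₂ = DC.below p := by
    ext q
    constructor
    · exact fun hq => hmax q hq
    · intro hq
      have hu : q ∈ Δ₁ ∪ Δ₂ := by rw [hcover]; exact Set.mem_univ q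
      rcases hu with h1 | h2
      · have : q = p := le_antisymm hq (hmin q h1)
        exact this ▸ hp2
      · exact h2
  subst hS
  have hcomp : ∀ q : P, q ≤ p ∨ p ≤ q := by
    intro q
    have hu : q ∈ Δ₁ ∪ DC.below p := by rw [hcover]; exact Set.mem_univ q
    rcases hu with h1 | h2
    · exact Or.inr (hmin q h1)
    · exact Or.inl h2
  exact ⟨⟨DC.equiv1 Φ p hrefl htrans hcomp⟩,
    fun _ => ⟨DC.equiv0 Φ p hrefl htrans hcomp⟩⟩
end

section
/- Characterization of the Euler cycle: the Euler cycle is the unique assignment Z ↦ e(Z) of rational 0-chains to finite simplicial complexes satisfying (1) inclusion-exclusion e(X∪Y) = e(X) + e(Y) − e(X∩Y), (2) calibration: for the full k-simplex σ (with all its faces), e(σ) = (Σ_v v)/(k+1) summing over its k+1 vertices, and (3) e(∅) = 0. -/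
/-- The Euler-cycle coefficient of a vertex `v` in a finite abstract simplicial
complex `X`: `e(v,X) = ∑_k (−1)^k · N_k(v,X) / (k+1)`. -/
def eulerCoeff {V : Type} [DecidableEq V] (X : Finset (Finset V)) (v : V) : ℚ :=
  ∑ s ∈ X.filter (fun s => v ∈ s), ((-1 : ℚ)) ^ (s.card - 1) / (s.card : ℚ)

/-- A finite abstract simplicial complex: a finite family of nonempty finite
simplices closed under passing to nonempty subsets. -/
def IsComplex {V : Type} (X : Finset (Finset V)) : Prop :=
  (∀ s ∈ X, s.Nonempty) ∧ ∀ s ∈ X, ∀ t ⊆ s, t.Nonempty → t ∈ X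

/-- The full (closed) simplex on a finite vertex set `s`: all nonempty subsets. -/
def fullSimplex {V : Type} [DecidableEq V] (s : Finset V) : Finset (Finset V) :=
  s.powerset.filter (fun t => t.Nonempty)

open Finset

private lemma alt_sum (n : ℕ) :
    ∑ j ∈ Finset.range (n+1), (-1:ℚ)^j * (n.choose j) / (j+1) = ((n:ℚ)+1)⁻¹ := by
  have h1 : ∑ j ∈ Finset.range (n+1), (-1:ℚ)^j * ((n+1).choose (j+1)) = 1 := by
    have h0 : (∑ i ∈ Finset.range (n+2), (-1:ℤ)^i * ((n+1).choose i) : ℤ) = 0 :=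
      Int.alternating_sum_range_choose_of_ne (Nat.succ_ne_zero n)
    have h0' : (∑ i ∈ Finset.range (n+2), (-1:ℚ)^i * ((n+1).choose i) : ℚ) = 0 := by
      have := congrArg (fun z : ℤ => (z : ℚ)) h0
      push_cast at this
      convert this using 2
    rw [Finset.sum_range_succ'] at h0'
    simp only [pow_succ, pow_zero, one_mul, Nat.choose_zero_right, Nat.cast_one] at h0'
    have : ∑ i ∈ Finset.range (n+1), (-1:ℚ)^i * (-1) * ((n+1).choose (i+1)) =
        -∑ j ∈ Finset.range (n+1), (-1:ℚ)^j * ((n+1).choose (j+1)) := by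
      rw [← Finset.sum_neg_distrib]
      exact Finset.sum_congr rfl fun i _ => by ring
    rw [this] at h0'
    linarith
  have key : ∀ j ∈ Finset.range (n+1),
      (-1:ℚ)^j * (n.choose j) / (j+1) = (-1:ℚ)^j * ((n+1).choose (j+1)) / (n+1) := by
    intro j _
    have hnat : n.choose j * (n+1) = (n+1).choose (j+1) * (j+1) := by
      rw [Nat.mul_comm]; exact Nat.add_one_mul_choose_eq n j
    have h' : ((n.choose j : ℚ)) * ((n:ℚ)+1) = (((n+1).choose (j+1) : ℚ)) * ((j:ℚ)+1) := by
      exact_mod_cast hnat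
    have hj : ((j:ℚ)+1) ≠ 0 := by positivity
    have hn : ((n:ℚ)+1) ≠ 0 := by positivity
    rw [mul_div_assoc, mul_div_assoc, (div_eq_div_iff hj hn).2 h']
  rw [Finset.sum_congr rfl key, ← Finset.sum_div, h1]
  rw [one_div]

private lemma coeff_full {V : Type} [DecidableEq V] (s : Finset V) (v : V) :
    eulerCoeff (fullSimplex s) v = if v ∈ s then ((s.card : ℚ))⁻¹ else 0 := by
  by_cases hv : v ∈ s
  · simp only [if_pos hv, eulerCoeff]
    have hstep : ∑ t ∈ (fullSimplex s).filter (fun t => v ∈ t),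
        ((-1:ℚ)) ^ (t.card - 1) / (t.card : ℚ) =
        ∑ u ∈ (s.erase v).powerset, ((-1:ℚ)) ^ u.card / ((u.card : ℚ) + 1) := by
      apply Finset.sum_nbij' (i := fun t => t.erase v) (j := fun u => insert v u)
      · intro t ht
        simp only [mem_filter, fullSimplex, mem_powerset] at ht
        simp only [mem_powerset]
        exact fun x hx => Finset.mem_erase.2 ⟨(Finset.mem_erase.1 hx).1,
          ht.1.1 (Finset.mem_erase.1 hx).2⟩
      · intro u hu
        simp only [mem_powerset] at hu
        simp only [mem_filter, fullSimplex, mem_powerset]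
        refine ⟨⟨Finset.insert_subset hv (hu.trans (Finset.erase_subset _ _)), ⟨v, Finset.mem_insert_self _ _⟩⟩, Finset.mem_insert_self _ _⟩
      · intro t ht
        simp only [mem_filter] at ht
        exact Finset.insert_erase ht.2
      · intro u hu
        simp only [mem_powerset] at hu
        exact Finset.erase_insert (fun h => (Finset.mem_erase.1 (hu h)).1 rfl)
      · intro t ht
        simp only [mem_filter] at ht
        have hvt : v ∈ t := ht.2
        have hc : t.card = (t.erase v).card + 1 := by
          rw [Finset.card_erase_of_mem hvt]
          have : 1 ≤ t.card := Finset.card_pos.2 ⟨v, hvt⟩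
          omega
        rw [hc]
        push_cast
        simp
    rw [hstep, Finset.sum_powerset]
    have hinner : ∀ j ∈ Finset.range ((s.erase v).card + 1),
        ∑ u ∈ Finset.powersetCard j (s.erase v), ((-1:ℚ)) ^ u.card / ((u.card : ℚ) + 1) =
        (-1:ℚ)^j * ((s.erase v).card.choose j) / (j+1) := by
      intro j _
      rw [Finset.sum_congr rfl (fun u hu => by
        rw [(Finset.mem_powersetCard.1 hu).2]), Finset.sum_const,
        Finset.card_powersetCard]
      simp only [nsmul_eq_mul]
      ring
    rw [Finset.sum_congr rfl hinner, alt_sum]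
    rw [Finset.card_erase_of_mem hv]
    have h1 : 1 ≤ s.card := Finset.card_pos.2 ⟨v, hv⟩
    congr 1
    have : ((s.card - 1 : ℕ) : ℚ) = (s.card : ℚ) - 1 := by
      push_cast [h1]; ring
    rw [this]; ring
  · simp only [if_neg hv, eulerCoeff]
    rw [Finset.filter_false_of_mem, Finset.sum_empty]
    intro t ht
    simp only [fullSimplex, mem_filter, mem_powerset] at ht
    exact fun hvt => hv (ht.1 hvt)

private lemma coeff_IE {V : Type} [DecidableEq V] (X Y : Finset (Finset V)) (v : V) :
    eulerCoeff (X ∪ Y) v = eulerCoeff X v + eulerCoeff Y v - eulerCoeff (X ∩ Y) v := by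
  simp only [eulerCoeff, Finset.filter_union, Finset.filter_inter_distrib]
  have := Finset.sum_union_inter (s₁ := X.filter (fun s => v ∈ s))
    (s₂ := Y.filter (fun s => v ∈ s)) (f := fun s => ((-1 : ℚ)) ^ (s.card - 1) / (s.card : ℚ))
  linarith


/-- characterization of the Euler cycle. The Euler cycle is the
unique assignment `Z ↦ e(Z)` of rational `0`-chains to finite simplicial
complexes satisfying (1) inclusion-exclusion `e(X ∪ Y) = e(X) + e(Y) − e(X ∩ Y)`,
(2) calibration `e(σ^{(k)}) = (∑_v v)/(k+1)` on the full simplex with `k+1`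
vertices, and (3) `e(∅) = 0`: the Euler cycle satisfies (1)–(3), and any
assignment satisfying (1)–(3) agrees with the Euler cycle on every complex. -/
theorem eulerCycle_characterization {V : Type} [DecidableEq V] :
    ((∀ X Y : Finset (Finset V), IsComplex X → IsComplex Y →
        (fun v => eulerCoeff (X ∪ Y) v) =
          (fun v => eulerCoeff X v) + (fun v => eulerCoeff Y v) -
            (fun v => eulerCoeff (X ∩ Y) v)) ∧
      (∀ s : Finset V, s.Nonempty →
        (fun v => eulerCoeff (fullSimplex s) v) =
          fun v => if v ∈ s then ((s.card : ℚ))⁻¹ else 0) ∧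
      (fun v => eulerCoeff (∅ : Finset (Finset V)) v) = 0) ∧
    ∀ f : Finset (Finset V) → (V → ℚ),
      (∀ X Y : Finset (Finset V), IsComplex X → IsComplex Y →
        f (X ∪ Y) = f X + f Y - f (X ∩ Y)) →
      (∀ s : Finset V, s.Nonempty →
        f (fullSimplex s) = fun v => if v ∈ s then ((s.card : ℚ))⁻¹ else 0) →
      f (∅ : Finset (Finset V)) = 0 →
      ∀ X : Finset (Finset V), IsComplex X → f X = fun v => eulerCoeff X v := by
  constructor
  · refine ⟨fun X Y _ _ => funext fun v => coeff_IE X Y v,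
      fun s _ => funext fun v => coeff_full s v, funext fun v => ?_⟩
    simp [eulerCoeff]
  · intro f hIE hcal hemp X
    induction X using Finset.strongInduction with
    | _ X IH =>
      intro hX
      rcases X.eq_empty_or_nonempty with rfl | hne
      · rw [hemp]; funext v; simp [eulerCoeff]
      · obtain ⟨s, hs, hmax⟩ : ∃ m ∈ X, ∀ x ∈ X, ¬m < x := by
          obtain ⟨m, hm⟩ := Finset.exists_maximal hne
          exact ⟨m, hm.1, fun x hx hlt => lt_irrefl _ (lt_of_lt_of_le hlt (hm.2 hx hlt.le))⟩
        have hsne : s.Nonempty := hX.1 s hs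
        have hsub : fullSimplex s ⊆ X := by
          intro t ht
          simp only [fullSimplex, mem_filter, mem_powerset] at ht
          exact hX.2 s hs t ht.1 ht.2
        have hsmem : s ∈ fullSimplex s := by
          simp [fullSimplex, hsne]
        have hunion : fullSimplex s ∪ X.erase s = X := by
          apply Finset.Subset.antisymm
          · exact Finset.union_subset hsub (Finset.erase_subset _ _)
          · intro t ht
            by_cases h : t = s
            · exact Finset.mem_union_left _ (h ▸ hsmem)
            · exact Finset.mem_union_right _ (Finset.mem_erase.2 ⟨h, ht⟩)
        have hinter : fullSimplex s ∩ X.erase s = (fullSimplex s).erase s := by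
          ext t
          simp only [mem_inter, mem_erase]
          constructor
          · rintro ⟨h1, h2, _⟩; exact ⟨h2, h1⟩
          · rintro ⟨h1, h2⟩; exact ⟨h2, h1, hsub h2⟩
        have cFull : IsComplex (fullSimplex s) := by
          constructor
          · intro t ht; exact (Finset.mem_filter.1 ht).2
          · intro t ht u hu hune
            simp only [fullSimplex, mem_filter, mem_powerset] at ht ⊢
            exact ⟨hu.trans ht.1, hune⟩
        have cY : IsComplex (X.erase s) := by
          constructor
          · intro t ht; exact hX.1 t (Finset.mem_of_mem_erase ht)
          · intro t ht u hu hune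
            have htX := Finset.mem_of_mem_erase ht
            have htns := (Finset.mem_erase.1 ht).1
            refine Finset.mem_erase.2 ⟨?_, hX.2 t htX u hu hune⟩
            intro hus
            apply hmax t htX
            exact lt_of_le_of_ne (Finset.le_iff_subset.2 (hus ▸ hu)) (fun he => htns he.symm)
        have cBd : IsComplex ((fullSimplex s).erase s) := by
          constructor
          · intro t ht; exact cFull.1 t (Finset.mem_of_mem_erase ht)
          · intro t ht u hu hune
            have htF := Finset.mem_of_mem_erase ht
            have htns := (Finset.mem_erase.1 ht).1
            refine Finset.mem_erase.2 ⟨?_, cFull.2 t htF u hu hune⟩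
            intro hus
            have hts : t ⊆ s := (Finset.mem_powerset.1 (Finset.mem_filter.1 htF).1)
            exact htns (Finset.Subset.antisymm hts (hus ▸ hu))
        have hYss : X.erase s ⊂ X := Finset.erase_ssubset hs
        have hBdss : (fullSimplex s).erase s ⊂ X := by
          refine Finset.ssubset_iff_of_subset ?_ |>.2 ⟨s, hs, fun h => (Finset.mem_erase.1 h).1 rfl⟩
          exact (Finset.erase_subset _ _).trans hsub
        have h1 := hIE (fullSimplex s) (X.erase s) cFull cY
        rw [hunion, hinter] at h1
        rw [h1, hcal s hsne, IH _ hYss cY, IH _ hBdss cBd]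
        funext v
        have h2 := coeff_IE (fullSimplex s) (X.erase s) v
        rw [hunion, hinter] at h2
        simp only [Pi.add_apply, Pi.sub_apply]
        rw [h2, coeff_full s v]
end
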